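/- Let q ≥ 2 be an integer, α > 0 a real number, and (m_n)_{n≥0} a sequence of natural numbers with m_0 = 0, m_1 = 1, and m_{n+1} ≥ 2·m_n for all n ≥ 1. Define ν_n = q^α + Σ_{l=1}^{n} q^{l·m_l}·(q^{α·(l+1)·m_{l+1}} − q^{α·l·m_l}) for n ≥ 0 (the sum empty for n = 0). Then ν_n·q^{−(n·m_n + α·(n+1)·m_{n+1})} → 1 as n → ∞; that is, ν_n ∼ q^{n·m_n + α·(n+1)·m_{n+1}}. -/

import Mathlib

open Filter Topology

/-- asymptotics of the Lévy density:
`ν_n ∼ q^{n m_n + α (n+1) m_{n+1}}` as `n → ∞`. -/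
theorem stmt11 (q : ℕ) (hq : 2 ≤ q) (α : ℝ) (hα : 0 < α)
    (m : ℕ → ℕ) (hm0 : m 0 = 0) (hm1 : m 1 = 1)
    (hmgrow : ∀ n : ℕ, 1 ≤ n → 2 * m n ≤ m (n + 1))
    (ν : ℕ → ℝ)
    (hν : ∀ n : ℕ, ν n = (q : ℝ) ^ α + ∑ l ∈ Finset.Icc 1 n,
      (q : ℝ) ^ (l * m l) *
        ((q : ℝ) ^ (α * (((l + 1) * m (l + 1) : ℕ) : ℝ))
          - (q : ℝ) ^ (α * ((l * m l : ℕ) : ℝ)))) :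
    Tendsto (fun n : ℕ =>
        ν n * (q : ℝ) ^ (-(((n * m n : ℕ) : ℝ) + α * (((n + 1) * m (n + 1) : ℕ) : ℝ))))
      atTop (𝓝 1) := by
  have hq1 : (1 : ℝ) < (q : ℝ) := by exact_mod_cast lt_of_lt_of_le one_lt_two hq
  have hq0 : (0 : ℝ) < (q : ℝ) := lt_trans one_pos hq1
  set r : ℝ := (q : ℝ) with hrdef
  -- the key natural-number quantities
  set a : ℕ → ℕ := fun n => n * m n with hadef
  have hdouble : ∀ k, 1 ≤ k → 2 * a k ≤ a (k + 1) := by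
    intro k hk
    have h1 := hmgrow k hk
    show 2 * (k * m k) ≤ (k + 1) * m (k + 1)
    calc 2 * (k * m k) = k * (2 * m k) := by ring
      _ ≤ k * m (k + 1) := Nat.mul_le_mul_left _ h1
      _ ≤ (k + 1) * m (k + 1) := Nat.mul_le_mul_right _ (by omega)
  have ha0 : a 0 = 0 := by simp [hadef]
  have ha1 : a 1 = 1 := by simp [hadef, hm1]
  have hamono : Monotone a := by
    apply monotone_nat_of_le_succ
    intro k
    rcases Nat.eq_zero_or_pos k with hk | hk
    · subst hk; simp [ha0]
    · have := hdouble k hk; omega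
  have haself : ∀ k, k ≤ a k := by
    intro k
    induction k with
    | zero => omega
    | succ k ih =>
        rcases Nat.eq_zero_or_pos k with hk | hk
        · subst hk; simp [ha1]
        · have := hdouble k hk; omega
  -- the exponent
  set E : ℕ → ℝ := fun n => ((a n : ℝ) + α * (a (n + 1) : ℝ)) with hEdef
  have hrpow_nonneg : ∀ x : ℝ, 0 ≤ r ^ x := fun x => Real.rpow_nonneg hq0.le x
  have hnpow_rpow : ∀ k : ℕ, (r : ℝ) ^ k = r ^ (k : ℝ) := by
    intro k; rw [Real.rpow_natCast]
  -- upper bound on ν n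
  have hub : ∀ n : ℕ, 1 ≤ n →
      ν n * r ^ (-(E n)) ≤ r ^ (α - E n) + 1 + (n : ℝ) * r ^ (-(α * (a n : ℝ))) := by
    intro n hn
    have hνle : ν n ≤ r ^ α + r ^ (E n) + (n : ℝ) * r ^ (E n - α * (a n : ℝ)) := by
      rw [hν n]
      have hterm : ∀ l ∈ Finset.Icc 1 n,
          (q : ℝ) ^ (l * m l) *
            ((q : ℝ) ^ (α * (((l + 1) * m (l + 1) : ℕ) : ℝ))
              - (q : ℝ) ^ (α * ((l * m l : ℕ) : ℝ))) ≤ r ^ (E l) := by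
        intro l hl
        have h1 : (q : ℝ) ^ (l * m l) *
            ((q : ℝ) ^ (α * (((l + 1) * m (l + 1) : ℕ) : ℝ))
              - (q : ℝ) ^ (α * ((l * m l : ℕ) : ℝ)))
            ≤ (q : ℝ) ^ (l * m l) * (q : ℝ) ^ (α * (((l + 1) * m (l + 1) : ℕ) : ℝ)) := by
          apply mul_le_mul_of_nonneg_left _ (by positivity)
          linarith [hrpow_nonneg (α * ((l * m l : ℕ) : ℝ))]
        refine h1.trans_eq ?_
        show (r : ℝ) ^ (a l) * r ^ (α * ((a (l + 1) : ℕ) : ℝ)) = r ^ (E l)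
        rw [hnpow_rpow, ← Real.rpow_add hq0]
      calc r ^ α + ∑ l ∈ Finset.Icc 1 n, (q : ℝ) ^ (l * m l) *
            ((q : ℝ) ^ (α * (((l + 1) * m (l + 1) : ℕ) : ℝ))
              - (q : ℝ) ^ (α * ((l * m l : ℕ) : ℝ)))
          ≤ r ^ α + ∑ l ∈ Finset.Icc 1 n, r ^ (E l) :=
            add_le_add_right (Finset.sum_le_sum hterm) _
        _ ≤ r ^ α + r ^ (E n) + (n : ℝ) * r ^ (E n - α * (a n : ℝ)) := by
            obtain ⟨p, rfl⟩ : ∃ p, n = p + 1 := ⟨n - 1, by omega⟩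
            rw [Finset.sum_Icc_succ_top (by omega : 1 ≤ p + 1)]
            have hsum : ∑ l ∈ Finset.Icc 1 p, r ^ (E l)
                ≤ ((p : ℝ)) * r ^ (E (p + 1) - α * (a (p + 1) : ℝ)) := by
              have := Finset.sum_le_card_nsmul (Finset.Icc 1 p) (fun l => r ^ (E l))
                (r ^ (E (p + 1) - α * (a (p + 1) : ℝ))) ?_
              · simpa [Nat.card_Icc, nsmul_eq_mul] using this
              · intro l hl
                simp only [Finset.mem_Icc] at hl
                rw [Real.rpow_le_rpow_left_iff hq1]
                have h2 : a l ≤ a (p + 1) := hamono (by omega)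
                have h3 : a (l + 1) ≤ a (p + 1) := hamono (by omega)
                have h4 : 2 * a (p + 1) ≤ a (p + 2) := hdouble (p + 1) (by omega)
                have h5 : (a l : ℝ) ≤ (a (p + 1) : ℝ) := by exact_mod_cast h2
                have h6 : (a (l + 1) : ℝ) + (a (p + 1) : ℝ) ≤ (a (p + 2) : ℝ) := by
                  exact_mod_cast (by omega : a (l + 1) + a (p + 1) ≤ a (p + 2))
                have h7 : α * ((a (l + 1) : ℝ) + (a (p + 1) : ℝ)) ≤ α * (a (p + 2) : ℝ) :=
                  mul_le_mul_of_nonneg_left h6 hα.le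
                simp only [hEdef]
                nlinarith
            have hp1 : (p : ℝ) + 1 ≥ 0 := by positivity
            have := hrpow_nonneg (E (p + 1) - α * (a (p + 1) : ℝ))
            push_cast
            nlinarith
    have hmul := mul_le_mul_of_nonneg_right hνle (hrpow_nonneg (-(E n)))
    refine hmul.trans_eq ?_
    rw [add_mul, add_mul, mul_assoc, ← Real.rpow_add hq0, ← Real.rpow_add hq0,
      ← Real.rpow_add hq0]
    have e1 : α + -(E n) = α - E n := by ring
    have e2 : E n + -(E n) = 0 := by ring
    have e3 : E n - α * (a n : ℝ) + -(E n) = -(α * (a n : ℝ)) := by ring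
    rw [e1, e2, e3, Real.rpow_zero]
  -- lower bound on ν n
  have hlb : ∀ n : ℕ, 1 ≤ n →
      1 - r ^ (-(α * (a n : ℝ))) ≤ ν n * r ^ (-(E n)) := by
    intro n hn
    have hνge : r ^ (E n) - r ^ ((a n : ℝ) + α * (a n : ℝ)) ≤ ν n := by
      rw [hν n]
      have hnonneg : ∀ l ∈ Finset.Icc 1 n,
          0 ≤ (q : ℝ) ^ (l * m l) *
            ((q : ℝ) ^ (α * (((l + 1) * m (l + 1) : ℕ) : ℝ))
              - (q : ℝ) ^ (α * ((l * m l : ℕ) : ℝ))) := by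
        intro l hl
        apply mul_nonneg (by positivity)
        rw [sub_nonneg]
        apply Real.rpow_le_rpow_of_exponent_le hq1.le
        have : a l ≤ a (l + 1) := hamono (by omega)
        have : (a l : ℝ) ≤ (a (l + 1) : ℝ) := by exact_mod_cast this
        show α * ((a l : ℕ) : ℝ) ≤ α * ((a (l + 1) : ℕ) : ℝ)
        exact mul_le_mul_of_nonneg_left this hα.le
      have hsingle : (q : ℝ) ^ (n * m n) *
            ((q : ℝ) ^ (α * (((n + 1) * m (n + 1) : ℕ) : ℝ))
              - (q : ℝ) ^ (α * ((n * m n : ℕ) : ℝ)))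
          ≤ ∑ l ∈ Finset.Icc 1 n, (q : ℝ) ^ (l * m l) *
            ((q : ℝ) ^ (α * (((l + 1) * m (l + 1) : ℕ) : ℝ))
              - (q : ℝ) ^ (α * ((l * m l : ℕ) : ℝ))) :=
        Finset.single_le_sum hnonneg (by simp [Finset.mem_Icc]; omega)
      have hkey : (q : ℝ) ^ (n * m n) *
            ((q : ℝ) ^ (α * (((n + 1) * m (n + 1) : ℕ) : ℝ))
              - (q : ℝ) ^ (α * ((n * m n : ℕ) : ℝ)))
          = r ^ (E n) - r ^ ((a n : ℝ) + α * (a n : ℝ)) := by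
        show (r : ℝ) ^ (a n) * (r ^ (α * ((a (n + 1) : ℕ) : ℝ)) - r ^ (α * ((a n : ℕ) : ℝ))) = _
        rw [hnpow_rpow, mul_sub, ← Real.rpow_add hq0, ← Real.rpow_add hq0]
      have := hrpow_nonneg α
      linarith [hkey ▸ hsingle]
    have hmul := mul_le_mul_of_nonneg_right hνge (hrpow_nonneg (-(E n)))
    refine le_trans ?_ hmul
    rw [sub_mul, ← Real.rpow_add hq0, ← Real.rpow_add hq0]
    have e2 : E n + -(E n) = 0 := by ring
    rw [e2, Real.rpow_zero]
    have hexp : (a n : ℝ) + α * (a n : ℝ) + -(E n) ≤ -(α * (a n : ℝ)) := by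
      have h4 : 2 * a n ≤ a (n + 1) := hdouble n hn
      have h5 : 2 * (a n : ℝ) ≤ (a (n + 1) : ℝ) := by exact_mod_cast h4
      have := mul_le_mul_of_nonneg_left h5 hα.le
      simp only [hEdef]
      nlinarith
    have := Real.rpow_le_rpow_of_exponent_le hq1.le hexp
    linarith
  -- limits of the error terms
  set s : ℝ := r ^ (-α) with hsdef
  have hs0 : 0 ≤ s := hrpow_nonneg _
  have hs1 : s < 1 := Real.rpow_lt_one_of_one_lt_of_neg hq1 (by linarith)
  have hskey : ∀ n : ℕ, r ^ (-(α * (a n : ℝ))) = s ^ (a n) := by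
    intro n
    rw [hsdef, ← Real.rpow_natCast (r ^ (-α)) (a n), ← Real.rpow_mul hq0.le]
    ring_nf
  have L1 : Tendsto (fun n : ℕ => r ^ (-(α * (a n : ℝ)))) atTop (𝓝 0) := by
    apply squeeze_zero (fun n => hrpow_nonneg _) (g := fun n : ℕ => s ^ n)
    · intro n
      rw [hskey n]
      exact pow_le_pow_of_le_one hs0 hs1.le (haself n)
    · exact tendsto_pow_atTop_nhds_zero_of_lt_one hs0 hs1
  have L2 : Tendsto (fun n : ℕ => (n : ℝ) * r ^ (-(α * (a n : ℝ)))) atTop (𝓝 0) := by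
    apply squeeze_zero (fun n => by positivity) (g := fun n : ℕ => (n : ℝ) * s ^ n)
    · intro n
      rw [hskey n]
      apply mul_le_mul_of_nonneg_left _ (by positivity)
      exact pow_le_pow_of_le_one hs0 hs1.le (haself n)
    · simpa using tendsto_pow_const_mul_const_pow_of_lt_one 1 hs0 hs1
  have L3 : Tendsto (fun n : ℕ => r ^ (α - E n)) atTop (𝓝 0) := by
    have hinv0 : (0 : ℝ) ≤ r⁻¹ := by positivity
    have hinv1 : r⁻¹ < 1 := inv_lt_one_of_one_lt₀ hq1
    apply squeeze_zero (fun n => hrpow_nonneg _) (g := fun n : ℕ => r ^ α * r⁻¹ ^ n)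
    · intro n
      have hEn : (n : ℝ) ≤ E n := by
        have h1 : (n : ℝ) ≤ (a n : ℝ) := by exact_mod_cast haself n
        have h2 : 0 ≤ α * (a (n + 1) : ℝ) := by positivity
        simp only [hEdef]; linarith
      have : r ^ (α - E n) ≤ r ^ (α - (n : ℝ)) :=
        Real.rpow_le_rpow_of_exponent_le hq1.le (by linarith)
      refine this.trans_eq ?_
      rw [sub_eq_add_neg, Real.rpow_add hq0, Real.rpow_neg hq0.le, Real.rpow_natCast,
        ← inv_pow]
    · simpa using (tendsto_pow_atTop_nhds_zero_of_lt_one hinv0 hinv1).const_mul (r ^ α)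
  -- squeeze
  have Llow : Tendsto (fun n : ℕ => 1 - r ^ (-(α * (a n : ℝ)))) atTop (𝓝 1) := by
    simpa using (tendsto_const_nhds (x := (1 : ℝ)) (f := atTop)).sub L1
  have Lup : Tendsto (fun n : ℕ => r ^ (α - E n) + 1 + (n : ℝ) * r ^ (-(α * (a n : ℝ))))
      atTop (𝓝 1) := by
    have := (L3.add (tendsto_const_nhds (x := (1 : ℝ)))).add L2
    simpa using this
  refine tendsto_of_tendsto_of_tendsto_of_le_of_le' Llow Lup ?_ ?_
  · filter_upwards [eventually_ge_atTop 1] with n hn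
    exact hlb n hn
  · filter_upwards [eventually_ge_atTop 1] with n hn
    exact hub n hn
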